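/- For any integer m ≥ 2, let 𝓗_m(x;t) = 1 + Σ_{n≥1} 𝓗_{n,m}(x) t^n be the generating function of the hook length polynomials 𝓗_{n,m}(x) = Σ_{T ∈ 𝒯_{n,m}} ∏_{v ∈ 𝓘(T)} ((m·𝓗_v − 1)x − 𝓗_v + 1)/((m−1)·𝓗_v), regarded as a formal power series in t with coefficients in ℚ(x). Then 𝓗_m(x;t) satisfies the differential equation 𝓗'_m(x;t) = x·𝓗_m(x;t)^{m+1} + (mx−1)·t·𝓗_m(x;t)^m·𝓗'_m(x;t), where the prime denotes the formal derivative with respect to t. -/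

import Mathlib

open Polynomial Finset

/-- A complete `m`-ary tree: a `leaf` is an external vertex and a `node`
has exactly `m` linearly ordered subtrees. -/
inductive MTree (m : ℕ) : Type
  | leaf : MTree m
  | node : (Fin m → MTree m) → MTree m

namespace MTree

/-- The number of internal vertices of a complete `m`-ary tree. -/
def internals {m : ℕ} : MTree m → ℕ
  | leaf => 0
  | node c => 1 + ∑ i, (c i).internals

/-- The first kind of hook length of the root of `node c`: one plus the number of
internal vertices of all subtrees except the rightmost one. -/
def hook1 {m : ℕ} (c : Fin m → MTree m) : ℕ :=
  1 + ∑ i ∈ Finset.univ.filter (fun i : Fin m => (i : ℕ) + 1 < m), (c i).internals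

/-- The product of `f (𝓗_v)` over all internal vertices `v` of a complete `m`-ary
tree, where `𝓗_v` is the first kind of hook length. -/
def hookProd1 {m : ℕ} {R : Type*} [CommSemiring R] (f : ℕ → R) : MTree m → R
  | leaf => 1
  | node c => f (hook1 c) * ∏ i, hookProd1 f (c i)

/-- The number of internal vertices of the `(m+1-|S|)`-ary tree `T^S` obtained from a
complete `(m+1)`-ary tree `T` by recursively deleting, for every `r ∈ S ⊆ [m]`,
the `r`-th subtree of every remaining internal vertex (the label `r ∈ {1,…,m}`
corresponds to the child with index `r - 1`, i.e. to `Fin.castSucc` of `Fin m`). -/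
def internalsS {m : ℕ} (S : Finset (Fin m)) : MTree (m + 1) → ℕ
  | leaf => 0
  | node c => 1 + ∑ i ∈ (S.image Fin.castSucc)ᶜ, internalsS S (c i)

/-- The product of `f (ℍ_v^S)` over all internal vertices `v` of a complete
`(m+1)`-ary tree, where `ℍ_v^S` is the second kind of hook length. -/
def hookProdS {m : ℕ} {R : Type*} [CommSemiring R] (S : Finset (Fin m)) (f : ℕ → R) :
    MTree (m + 1) → R
  | leaf => 1
  | node c => f (internalsS S (node c)) * ∏ i, hookProdS S f (c i)

end MTree

open scoped PowerSeries

/-- The hook length polynomial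
`𝓗_{n,m}(x) = Σ_{T ∈ 𝒯_{n,m}} ∏_{v ∈ 𝓘(T)} ((m𝓗_v - 1)x - 𝓗_v + 1)/((m-1)𝓗_v)`
(for `n = 0` the only tree is the single external vertex, so `𝓗_{0,m}(x) = 1`). -/
noncomputable def hookPoly (m n : ℕ) : Polynomial ℚ :=
  ∑ᶠ T ∈ {T : MTree m | T.internals = n},
    MTree.hookProd1 (fun h =>
      C ((((m : ℚ) - 1) * (h : ℚ))⁻¹) *
        (C ((m : ℚ) * (h : ℚ) - 1) * (X : ℚ[X]) - C ((h : ℚ) - 1))) T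

/-- The generating function `𝓗_m(x;t) = 1 + Σ_{n≥1} 𝓗_{n,m}(x) tⁿ`, as a formal
power series in `t` with polynomial coefficients. -/
noncomputable def hookGF (m : ℕ) : PowerSeries (Polynomial ℚ) :=
  PowerSeries.mk (hookPoly m)



section
open Polynomial Finset MTree
open scoped PowerSeries

namespace HookAux

noncomputable instance {m : ℕ} : DecidableEq (MTree m) := Classical.decEq _

variable (m : ℕ)

noncomputable def f (h : ℕ) : ℚ[X] :=
  Polynomial.C ((((m : ℚ) - 1) * (h : ℚ))⁻¹) *
    (Polynomial.C ((m : ℚ) * (h : ℚ) - 1) * (Polynomial.X : ℚ[X]) - Polynomial.C ((h : ℚ) - 1))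

noncomputable def w : MTree m → ℚ[X] := MTree.hookProd1 (f m)

noncomputable def treesF : ℕ → Finset (MTree m)
  | 0 => {MTree.leaf}
  | n + 1 =>
    ((Fintype.piFinset fun _ : Fin m =>
        (Finset.range (n + 1)).attach.biUnion fun j => treesF j.1).filter
      fun c => ∑ i, (c i).internals = n).image MTree.node
  decreasing_by exact Finset.mem_range.mp j.2

noncomputable def tuplesF (j l : ℕ) : Finset (Fin j → MTree m) :=
  (Fintype.piFinset fun _ : Fin j =>
      (Finset.range (l + 1)).attach.biUnion fun i => treesF m i.1).filter
    fun c => ∑ i, (c i).internals = l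

lemma mem_treesF : ∀ n (T : MTree m), T ∈ treesF m n ↔ T.internals = n := by
  intro n
  induction n using Nat.strong_induction_on with
  | _ n ih =>
    match n with
    | 0 =>
      intro T
      cases T with
      | leaf => simp [treesF, MTree.internals]
      | node c => simp [treesF, MTree.internals]
    | n + 1 =>
      intro T
      constructor
      · intro hT
        simp only [treesF, Finset.mem_image, Finset.mem_filter] at hT
        obtain ⟨c, ⟨-, hsum⟩, rfl⟩ := hT
        simp [MTree.internals, hsum, Nat.add_comm]
      · intro hT
        cases T with
        | leaf => simp [MTree.internals] at hT
        | node c =>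
          have hsum : ∑ i, (c i).internals = n := by
            have : 1 + ∑ i, (c i).internals = n + 1 := hT
            omega
          simp only [treesF, Finset.mem_image]
          refine ⟨c, Finset.mem_filter.mpr ⟨Fintype.mem_piFinset.mpr fun i => ?_, hsum⟩, rfl⟩
          have hle : (c i).internals < n + 1 := by
            have h2 : (c i).internals ≤ ∑ x, (c x).internals :=
              Finset.single_le_sum (f := fun x => (c x).internals) (fun i _ => Nat.zero_le _) (Finset.mem_univ i)
            omega
          exact Finset.mem_biUnion.mpr
            ⟨⟨(c i).internals, Finset.mem_range.mpr hle⟩, Finset.mem_attach _ _,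
              (ih _ hle _).mpr rfl⟩

lemma mem_tuplesF {j l : ℕ} (c : Fin j → MTree m) :
    c ∈ tuplesF m j l ↔ ∑ i, (c i).internals = l := by
  constructor
  · intro hc; exact (Finset.mem_filter.mp hc).2
  · intro hc
    refine Finset.mem_filter.mpr ⟨Fintype.mem_piFinset.mpr fun i => ?_, hc⟩
    have hle : (c i).internals < l + 1 := by
      have h2 : (c i).internals ≤ ∑ x, (c x).internals :=
        Finset.single_le_sum (f := fun x => (c x).internals) (fun i _ => Nat.zero_le _) (Finset.mem_univ i)
      omega
    exact Finset.mem_biUnion.mpr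
      ⟨⟨(c i).internals, Finset.mem_range.mpr hle⟩, Finset.mem_attach _ _,
        (mem_treesF m _ _).mpr rfl⟩

lemma treesF_succ (n : ℕ) : treesF m (n + 1) = (tuplesF m m n).image MTree.node := by
  rw [treesF, tuplesF]

lemma coeff_hookGF (n : ℕ) :
    PowerSeries.coeff n (hookGF m) = ∑ T ∈ treesF m n, w m T := by
  rw [hookGF, PowerSeries.coeff_mk, hookPoly]
  have hs : {T : MTree m | T.internals = n} = ↑(treesF m n) := by
    ext T; simp [mem_treesF]
  rw [hs, finsum_mem_coe_finset]
  rfl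

end HookAux
end

section
open Polynomial Finset MTree
open scoped PowerSeries

namespace HookAux

lemma split (m : ℕ) (F : ℕ → ℚ[X]) (j l : ℕ) :
    ∑ c ∈ tuplesF m (j + 1) l,
      (F (∑ i : Fin j, (c i.castSucc).internals) * ∏ i : Fin j, w m (c i.castSucc))
        * w m (c (Fin.last j)) =
    ∑ ab ∈ antidiagonal l,
      F ab.1 * (∑ c ∈ tuplesF m j ab.1, ∏ i, w m (c i)) * ∑ T ∈ treesF m ab.2, w m T := by
  have hR : ∑ ab ∈ antidiagonal l,
      F ab.1 * (∑ c ∈ tuplesF m j ab.1, ∏ i, w m (c i)) * (∑ T ∈ treesF m ab.2, w m T) =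
      ∑ x ∈ (antidiagonal l).sigma fun ab => tuplesF m j ab.1 ×ˢ treesF m ab.2,
        F x.1.1 * ((∏ i, w m (x.2.1 i)) * w m x.2.2) := by
    rw [Finset.sum_sigma]
    refine Finset.sum_congr rfl fun ab _ => ?_
    rw [Finset.sum_product]
    simp only [Finset.mul_sum, Finset.sum_mul]
    rw [Finset.sum_comm]
    exact Finset.sum_congr rfl fun c _ => Finset.sum_congr rfl fun T _ => by ring
  rw [hR]
  refine Finset.sum_nbij'
    (fun c => ⟨(∑ i : Fin j, (c i.castSucc).internals, (c (Fin.last j)).internals),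
      (fun i => c i.castSucc, c (Fin.last j))⟩)
    (fun x => Fin.snoc x.2.1 x.2.2) ?_ ?_ ?_ ?_ ?_
  · intro c hc
    rw [mem_tuplesF] at hc
    refine Finset.mem_sigma.mpr ⟨?_, ?_⟩
    · rw [Finset.HasAntidiagonal.mem_antidiagonal, ← hc, Fin.sum_univ_castSucc]
    · exact Finset.mem_product.mpr ⟨(mem_tuplesF m _).mpr rfl, (mem_treesF m _ _).mpr rfl⟩
  · intro x hx
    obtain ⟨hx1, hx2⟩ := Finset.mem_sigma.mp hx
    obtain ⟨hc, hT⟩ := Finset.mem_product.mp hx2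
    rw [mem_tuplesF] at hc ⊢
    rw [mem_treesF] at hT
    rw [Fin.sum_univ_castSucc]
    simp only [Fin.snoc_castSucc, Fin.snoc_last, hc, hT]
    exact Finset.HasAntidiagonal.mem_antidiagonal.mp hx1
  · intro c _
    funext i
    refine Fin.lastCases ?_ ?_ i
    · simp
    · intro i; simp
  · rintro ⟨⟨a, b⟩, ⟨c, T⟩⟩ hx
    obtain ⟨hx1, hx2⟩ := Finset.mem_sigma.mp hx
    obtain ⟨hc, hT⟩ := Finset.mem_product.mp hx2
    rw [mem_tuplesF] at hc
    rw [mem_treesF] at hT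
    simp only [Fin.snoc_castSucc, Fin.snoc_last]
    congr 1
    exact Prod.ext hc hT
  · intro c _
    dsimp only
    rw [mul_assoc]

lemma coeff_pow (m : ℕ) : ∀ j l : ℕ,
    PowerSeries.coeff l (hookGF m ^ j) = ∑ c ∈ tuplesF m j l, ∏ i, w m (c i) := by
  intro j
  induction j with
  | zero =>
    intro l
    have h1 : tuplesF m 0 l = if l = 0 then {(fun i => i.elim0 : Fin 0 → MTree m)} else ∅ := by
      ext c
      have hc : c = fun i => i.elim0 := funext fun i => i.elim0
      subst hc
      rcases eq_or_ne l 0 with h | h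
      · simp [mem_tuplesF, h]
      · simp [mem_tuplesF, h, Ne.symm h]
    rw [pow_zero, h1]
    rcases eq_or_ne l 0 with h | h
    · subst h; simp
    · simp [h, PowerSeries.coeff_one]
  | succ j ih =>
    intro l
    rw [pow_succ, PowerSeries.coeff_mul]
    have : ∀ ab ∈ antidiagonal l,
        PowerSeries.coeff ab.1 (hookGF m ^ j) * PowerSeries.coeff ab.2 (hookGF m) =
        (1 : ℚ[X]) * (∑ c ∈ tuplesF m j ab.1, ∏ i, w m (c i)) * ∑ T ∈ treesF m ab.2, w m T := by
      intro ab _; rw [ih, coeff_hookGF, one_mul]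
    rw [Finset.sum_congr rfl this]
    refine ((split m (fun _ => (1 : ℚ[X])) j l).symm).trans ?_
    refine Finset.sum_congr rfl fun c _ => ?_
    rw [one_mul, Fin.prod_univ_castSucc]

lemma hook1_eq (p : ℕ) (c : Fin (p + 1) → MTree (p + 1)) :
    MTree.hook1 c = 1 + ∑ i : Fin p, (c i.castSucc).internals := by
  rw [MTree.hook1]
  congr 1
  have hset : (Finset.univ.filter fun i : Fin (p + 1) => (i : ℕ) + 1 < p + 1) =
      Finset.image Fin.castSucc Finset.univ := by
    ext i
    simp only [Finset.mem_filter, Finset.mem_univ, true_and, Finset.mem_image]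
    constructor
    · intro hi
      exact ⟨⟨(i : ℕ), by omega⟩, by ext; simp⟩
    · rintro ⟨j, rfl⟩
      simp [Fin.is_lt]
  rw [hset, Finset.sum_image fun a _ b _ h => Fin.castSucc_injective _ h]

lemma coeff_succ (p n : ℕ) :
    PowerSeries.coeff (n + 1) (hookGF (p + 1)) =
    ∑ ab ∈ antidiagonal n,
      f (p + 1) (1 + ab.1) * (∑ c ∈ tuplesF (p + 1) p ab.1, ∏ i, w (p + 1) (c i))
        * ∑ T ∈ treesF (p + 1) ab.2, w (p + 1) T := by
  rw [coeff_hookGF, treesF_succ,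
    Finset.sum_image (fun a _ b _ h => by injection h)]
  refine Eq.trans ?_ (split (p + 1) (fun a => f (p + 1) (1 + a)) p n)
  refine Finset.sum_congr rfl fun c _ => ?_
  show w (p + 1) (MTree.node c) = _
  rw [show w (p + 1) (MTree.node c) =
    f (p + 1) (MTree.hook1 c) * ∏ i, w (p + 1) (c i) from rfl]
  rw [hook1_eq, Fin.prod_univ_castSucc, mul_assoc]

end HookAux
end

section
open Polynomial Finset MTree
open scoped PowerSeries

namespace HookAux

noncomputable def K (p : ℕ) : PowerSeries ℚ[X] :=
  PowerSeries.mk fun n =>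
    Polynomial.C ((n : ℚ)⁻¹) * PowerSeries.coeff (n - 1) (hookGF (p + 1) ^ p)

lemma deriv_K (p : ℕ) : d⁄dX ℚ[X] (K p) = hookGF (p + 1) ^ p := by
  refine PowerSeries.ext fun n => ?_
  rw [PowerSeries.coeff_derivative, K, PowerSeries.coeff_mk, Nat.add_sub_cancel]
  have key : ((n : ℚ[X]) + 1) * Polynomial.C (((n + 1 : ℕ) : ℚ))⁻¹ = 1 := by
    have h2 : ((n : ℚ[X]) + 1) = Polynomial.C (((n + 1 : ℕ) : ℚ)) := by
      rw [Polynomial.C_eq_natCast]; push_cast; ring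
    rw [h2, ← Polynomial.C_mul, mul_inv_cancel₀ (by positivity), Polynomial.C_1]
  rw [mul_comm, ← mul_assoc, key, one_mul]

noncomputable def aP (p : ℕ) : ℚ[X] :=
  Polynomial.C ((p : ℚ)⁻¹) * (Polynomial.C ((p : ℚ) + 1) * Polynomial.X - 1)

noncomputable def bP (p : ℕ) : ℚ[X] :=
  Polynomial.C ((p : ℚ)⁻¹) * (Polynomial.X - 1)

lemma f_eq (p h : ℕ) (hh : h ≠ 0) :
    f (p + 1) h = aP p - Polynomial.C ((h : ℚ)⁻¹) * bP p := by
  have eh : Polynomial.C ((h : ℚ)⁻¹) * Polynomial.C ((h : ℚ)) = 1 := by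
    rw [← Polynomial.C_mul, inv_mul_cancel₀ (by exact_mod_cast hh), Polynomial.C_1]
  rw [f, aP, bP]
  have hcast : (((p : ℕ) + 1 : ℕ) : ℚ) = (p : ℚ) + 1 := by push_cast; ring
  rw [hcast]
  have e1 : (((p : ℚ) + 1 - 1) * (h : ℚ))⁻¹ = (p : ℚ)⁻¹ * (h : ℚ)⁻¹ := by
    rw [mul_inv]; ring_nf
  rw [e1]
  have e2 : (((p : ℚ) + 1) * (h : ℚ) - 1) = ((p : ℚ) + 1) * (h : ℚ) - 1 := rfl
  have e3 : ((h : ℚ) - 1) = (h : ℚ) - 1 := rfl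
  simp only [Polynomial.C_mul, Polynomial.C_sub, Polynomial.C_add, Polynomial.C_1]
  linear_combination
    (Polynomial.C ((p : ℚ)⁻¹) * ((Polynomial.C ((p : ℚ)) + 1) * Polynomial.X - 1)) * eh

lemma coeff_zero (p : ℕ) : PowerSeries.coeff 0 (hookGF (p + 1)) = 1 := by
  rw [coeff_hookGF]
  rw [show treesF (p + 1) 0 = {MTree.leaf} by rw [treesF]]
  simp [w, MTree.hookProd1]

lemma funEq (p : ℕ) :
    hookGF (p + 1) =
      1 + PowerSeries.C (aP p) * PowerSeries.X * hookGF (p + 1) ^ (p + 1)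
        - PowerSeries.C (bP p) * (hookGF (p + 1) * K p) := by
  refine PowerSeries.ext fun n => ?_
  rw [map_sub, map_add]
  cases n with
  | zero =>
    rw [coeff_zero]
    have hX : PowerSeries.coeff 0
        (PowerSeries.C (aP p) * PowerSeries.X * hookGF (p + 1) ^ (p + 1)) = 0 := by
      rw [mul_assoc, PowerSeries.coeff_zero_eq_constantCoeff, map_mul, map_mul]
      simp
    have hK0 : PowerSeries.coeff 0 (K p) = 0 := by
      rw [K, PowerSeries.coeff_mk]
      simp
    rw [hX, PowerSeries.coeff_zero_eq_constantCoeff, map_mul, map_mul]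
    rw [PowerSeries.coeff_zero_eq_constantCoeff] at hK0
    simp [hK0]
  | succ n =>
    rw [coeff_succ]
    have hOne : PowerSeries.coeff (n + 1) (1 : PowerSeries ℚ[X]) = 0 := by
      simp [PowerSeries.coeff_one]
    have hA : PowerSeries.coeff (n + 1)
        (PowerSeries.C (aP p) * PowerSeries.X * hookGF (p + 1) ^ (p + 1)) =
        aP p * ∑ ab ∈ antidiagonal n,
          (PowerSeries.coeff ab.1 (hookGF (p + 1) ^ p)) *
            PowerSeries.coeff ab.2 (hookGF (p + 1)) := by
      rw [mul_assoc, mul_comm (PowerSeries.X) _, ← mul_assoc, PowerSeries.coeff_succ_mul_X,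
        PowerSeries.coeff_C_mul, pow_succ, PowerSeries.coeff_mul]
    have hB : PowerSeries.coeff (n + 1)
        (PowerSeries.C (bP p) * (hookGF (p + 1) * K p)) =
        bP p * ∑ ab ∈ antidiagonal n,
          (PowerSeries.coeff ab.2 (hookGF (p + 1))) *
            (Polynomial.C (((ab.1 : ℚ) + 1)⁻¹) *
              PowerSeries.coeff ab.1 (hookGF (p + 1) ^ p)) := by
      rw [PowerSeries.coeff_C_mul, PowerSeries.coeff_mul, Finset.Nat.sum_antidiagonal_succ']
      congr 1
      have hK0 : PowerSeries.coeff 0 (K p) = 0 := by rw [K, PowerSeries.coeff_mk]; simp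
      rw [hK0, mul_zero, zero_add]
      rw [← Finset.Nat.sum_antidiagonal_swap
        (f := fun q : ℕ × ℕ => PowerSeries.coeff q.2 (hookGF (p + 1)) *
          (Polynomial.C (((q.1 : ℚ) + 1)⁻¹) * PowerSeries.coeff q.1 (hookGF (p + 1) ^ p)))]
      refine Finset.sum_congr rfl fun q _ => ?_
      rw [K, PowerSeries.coeff_mk]
      simp only [Prod.fst_swap, Prod.snd_swap, Nat.add_sub_cancel]
      push_cast
      ring
    rw [hOne, hA, hB, zero_add, Finset.mul_sum, Finset.mul_sum, ← Finset.sum_sub_distrib]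
    refine Finset.sum_congr rfl fun ab _ => ?_
    rw [coeff_pow, coeff_hookGF, f_eq p (1 + ab.1) (by omega)]
    have : ((1 + ab.1 : ℕ) : ℚ) = (ab.1 : ℚ) + 1 := by push_cast; ring
    rw [this]
    ring

end HookAux
end

section
open Polynomial Finset MTree
open scoped PowerSeries

namespace HookAux

lemma constA (p : ℕ) (hp : 1 ≤ p) :
    PowerSeries.C (aP p) - PowerSeries.C (bP p) =
      PowerSeries.C (Polynomial.X : ℚ[X]) := by
  have hp0 : (p : ℚ) ≠ 0 := Nat.cast_ne_zero.mpr (by omega)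
  rw [← map_sub]
  congr 1
  have eC : Polynomial.C ((p : ℚ)⁻¹) * Polynomial.C ((p : ℚ)) = 1 := by
    rw [← Polynomial.C_mul, inv_mul_cancel₀ hp0, Polynomial.C_1]
  simp only [aP, bP, Polynomial.C_add, Polynomial.C_1]
  linear_combination Polynomial.X * eC

lemma constB (p : ℕ) (hp : 1 ≤ p) :
    ((p : ℕ) : PowerSeries ℚ[X]) * PowerSeries.C (aP p) =
      PowerSeries.C (Polynomial.C (((p + 1 : ℕ)) : ℚ) * Polynomial.X - 1) := by
  have hp0 : (p : ℚ) ≠ 0 := Nat.cast_ne_zero.mpr (by omega)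
  have h1 : ((p : ℕ) : PowerSeries ℚ[X]) = PowerSeries.C ((p : ℚ[X])) := by
    simp
  rw [h1, ← map_mul]
  congr 1
  have h2 : ((p : ℚ[X])) = Polynomial.C ((p : ℚ)) := by simp
  rw [h2]
  have h3 : (((p + 1 : ℕ)) : ℚ) = (p : ℚ) + 1 := by push_cast; ring
  rw [h3]
  have eC : Polynomial.C ((p : ℚ)) * Polynomial.C ((p : ℚ)⁻¹) = 1 := by
    rw [← Polynomial.C_mul, mul_inv_cancel₀ hp0, Polynomial.C_1]
  simp only [aP, Polynomial.C_add, Polynomial.C_1]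
  linear_combination ((Polynomial.C ((p : ℚ)) + 1) * Polynomial.X - 1) * eC

end HookAux
end


/-- **Differential equation for the generating function `𝓗_m(x;t)`.**
For `m ≥ 2`:  `𝓗'_m(x;t) = x 𝓗_m(x;t)^{m+1} + (mx-1) t 𝓗_m(x;t)^m 𝓗'_m(x;t)`,
the derivative being taken with respect to `t`. -/
theorem hookGF_differential_equation (m : ℕ) (hm : 2 ≤ m) :
    d⁄dX (Polynomial ℚ) (hookGF m) =
      PowerSeries.C (X : ℚ[X]) * hookGF m ^ (m + 1) +
        PowerSeries.C (C (m : ℚ) * (X : ℚ[X]) - 1) * PowerSeries.X *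
          hookGF m ^ m * d⁄dX (Polynomial ℚ) (hookGF m) := by

  obtain ⟨p, rfl⟩ : ∃ p, m = p + 1 := ⟨m - 1, by omega⟩
  have hp : 1 ≤ p := by omega
  set H := hookGF (p + 1) with hH
  set H' := d⁄dX ℚ[X] H with hH'
  have e2 := HookAux.funEq p
  have e1 := congrArg (d⁄dX ℚ[X]) e2
  simp only [map_add, map_sub, Derivation.map_one_eq_zero, Derivation.leibniz,
    Derivation.leibniz_pow, PowerSeries.derivative_X, PowerSeries.derivative_C,
    HookAux.deriv_K, smul_eq_mul, nsmul_eq_mul, Nat.add_sub_cancel, mul_one, mul_zero,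
    zero_add, add_zero, zero_mul] at e1
  push_cast at e1
  have f1 := HookAux.constA p hp
  have f2 := HookAux.constB p hp
  rw [← hH'] at e1
  linear_combination H * e1 - H' * e2 + H ^ (p + 2) * f1
    + PowerSeries.X * H ^ (p + 1) * H' * f2
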